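/- If r is rational and cos(rπ) is a real algebraic number of degree 2 over ℚ (a quadratic irrationality), then cos(rπ) ∈ {±√2/2, ±√3/2, (1+√5)/4, (1-√5)/4, (-1+√5)/4, (-1-√5)/4}. -/

import Mathlib

open Real Polynomial

lemma fact120_2 : (120:ℕ).factorization 2 = 3 := by
  rw [show (120:ℕ) = 2^3*15 by norm_num, Nat.factorization_mul (by norm_num) (by norm_num),
    Nat.factorization_pow]
  simp [Nat.Prime.factorization Nat.prime_two,
    Nat.factorization_eq_zero_of_not_dvd (by norm_num : ¬ 2 ∣ 15)]

lemma fact120_3 : (120:ℕ).factorization 3 = 1 := by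
  rw [show (120:ℕ) = 3*40 by norm_num, Nat.factorization_mul (by norm_num) (by norm_num)]
  simp [Nat.Prime.factorization Nat.prime_three,
    Nat.factorization_eq_zero_of_not_dvd (by norm_num : ¬ 3 ∣ 40)]

lemma fact120_5 : (120:ℕ).factorization 5 = 1 := by
  rw [show (120:ℕ) = 5*24 by norm_num, Nat.factorization_mul (by norm_num) (by norm_num)]
  simp [Nat.Prime.factorization (by norm_num : Nat.Prime 5),
    Nat.factorization_eq_zero_of_not_dvd (by norm_num : ¬ 5 ∣ 24)]

set_option maxRecDepth 20000 in
lemma totient_le_four_bound {n : ℕ} (hn : 0 < n) (h : n.totient ≤ 4) : n ≤ 12 := by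
  have hdvd : n ∣ 120 := by
    have key : ∀ m : ℕ, m ∣ n → m.totient ≤ 4 := fun m hm =>
      le_trans (Nat.le_of_dvd (Nat.totient_pos.mpr hn) (Nat.totient_dvd_of_dvd hm)) h
    rw [← Nat.factorization_le_iff_dvd hn.ne' (by norm_num), Finsupp.le_def]
    intro p
    by_contra hlt
    push_neg at hlt
    have hp : p.Prime := by
      by_contra hnp
      rw [Nat.factorization_eq_zero_of_not_prime n hnp] at hlt
      exact Nat.not_lt_zero _ hlt
    have hpow : ∀ k : ℕ, k ≤ n.factorization p → p ^ k ∣ n := fun k hk =>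
      (Nat.Prime.pow_dvd_iff_le_factorization hp hn.ne').mpr hk
    have hfp : 1 ≤ n.factorization p := (Nat.zero_le _).trans_lt hlt
    have hpdvd : p ∣ n := by simpa using hpow 1 hfp
    have hple : p ≤ 5 := by
      have h1 := key p hpdvd
      rw [Nat.totient_prime hp] at h1
      omega
    have hp2 := hp.two_le
    interval_cases p
    · rw [fact120_2] at hlt
      exact absurd (key 16 (by simpa using hpow 4 hlt)) (by decide)
    · rw [fact120_3] at hlt
      exact absurd (key 9 (by simpa using hpow 2 hlt)) (by decide)
    · norm_num at hp
    · rw [fact120_5] at hlt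
      exact absurd (key 25 (by simpa using hpow 2 hlt)) (by decide)
  have h120 : n ≤ 120 := Nat.le_of_dvd (by norm_num) hdvd
  have hall : ∀ m : ℕ, m ≤ 120 → m.totient ≤ 4 → m ≤ 12 := by decide
  exact hall n h120 h

lemma v_2pi3 : Real.cos (2*π/3) = -(1/2) := by
  rw [show (2*π/3:ℝ) = π - π/3 by ring, Real.cos_pi_sub, Real.cos_pi_div_three]

lemma v_3pi4 : Real.cos (3*π/4) = -(Real.sqrt 2/2) := by
  rw [show (3*π/4:ℝ) = π - π/4 by ring, Real.cos_pi_sub, Real.cos_pi_div_four]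

lemma v_5pi6 : Real.cos (5*π/6) = -(Real.sqrt 3/2) := by
  rw [show (5*π/6:ℝ) = π - π/6 by ring, Real.cos_pi_sub, Real.cos_pi_div_six]

lemma v_2pi5 : Real.cos (2*π/5) = (-1+Real.sqrt 5)/4 := by
  have h := Real.cos_two_mul (π/5)
  rw [Real.cos_pi_div_five] at h
  rw [show (2*π/5:ℝ) = 2*(π/5) by ring, h]
  have h5 : Real.sqrt 5 ^ 2 = 5 := Real.sq_sqrt (by norm_num)
  linear_combination h5/8

lemma v_3pi5 : Real.cos (3*π/5) = (1-Real.sqrt 5)/4 := by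
  rw [show (3*π/5:ℝ) = π - 2*π/5 by ring, Real.cos_pi_sub, v_2pi5]
  ring

lemma v_4pi5 : Real.cos (4*π/5) = (-1-Real.sqrt 5)/4 := by
  rw [show (4*π/5:ℝ) = π - π/5 by ring, Real.cos_pi_sub, Real.cos_pi_div_five]
  ring

theorem niven_quadratic (r : ℚ) (hirr : Irrational (Real.cos (r * π)))
    (halg : ∃ p : Polynomial ℚ, p.degree = 2 ∧ Polynomial.aeval (Real.cos (r * π)) p = 0) :
    Real.cos (r * π) ∈
      ({Real.sqrt 2 / 2, -(Real.sqrt 2 / 2), Real.sqrt 3 / 2, -(Real.sqrt 3 / 2),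
        (1 + Real.sqrt 5) / 4, (1 - Real.sqrt 5) / 4,
        (-1 + Real.sqrt 5) / 4, (-1 - Real.sqrt 5) / 4} : Set ℝ) := by
  obtain ⟨P, hPdeg, hProot⟩ := halg
  set θ : ℝ := (r:ℝ) * π with hθdef
  set c : ℝ := Real.cos θ with hcdef
  have hratfalse : ∀ s : ℚ, c = (s:ℝ) → False := fun s hs => hirr ⟨s, hs.symm⟩
  -- extract quadratic relation
  have hPnd : P.natDegree = 2 := natDegree_eq_of_degree_eq_some hPdeg
  have hP0 : P ≠ 0 := fun h => by simp [h] at hPdeg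
  have ha2 : P.coeff 2 ≠ 0 := by
    have := Polynomial.leadingCoeff_ne_zero.mpr hP0
    rwa [Polynomial.leadingCoeff, hPnd] at this
  have hsum := Polynomial.aeval_eq_sum_range (x := c) (p := P)
  rw [hProot, hPnd] at hsum
  simp [Finset.sum_range_succ, Rat.smul_def] at hsum
  set pp : ℚ := -P.coeff 1 / P.coeff 2 with hpp
  set qq : ℚ := -P.coeff 0 / P.coeff 2 with hqq
  have ha2R : ((P.coeff 2 : ℚ):ℝ) ≠ 0 := by exact_mod_cast ha2
  have hpq : c^2 = (pp:ℝ)*c + (qq:ℝ) := by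
    rw [hpp, hqq]
    push_cast
    field_simp
    linear_combination (-1:ℝ) * hsum
  -- complex root of unity
  set z : ℂ := Complex.exp ((θ:ℂ) * Complex.I) with hzdef
  have hzpow : z ^ (2 * r.den) = 1 := by
    rw [hzdef, ← Complex.exp_nat_mul]
    have hd : ((r.den:ℝ)) ≠ 0 := by
      exact_mod_cast r.den_nz
    have h1 : ((2 * r.den : ℕ) : ℝ) * θ = (r.num : ℝ) * (2*π) := by
      rw [hθdef, Rat.cast_def]
      push_cast
      field_simp
    have h2 : ((2 * r.den : ℕ) : ℂ) * ((θ:ℂ) * Complex.I) = (r.num : ℂ) * (2*(π:ℂ)*Complex.I) := by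
      have h3 := congrArg (fun t : ℝ => (t:ℂ) * Complex.I) h1
      push_cast at h3 ⊢
      linear_combination h3
    rw [h2, Complex.exp_int_mul_two_pi_mul_I]
  have hfin : IsOfFinOrder z := isOfFinOrder_iff_pow_eq_one.mpr
    ⟨2 * r.den, Nat.mul_pos (by norm_num) r.pos, hzpow⟩
  have hprim : IsPrimitiveRoot z (orderOf z) := IsPrimitiveRoot.orderOf z
  have hnpos : 0 < orderOf z := hfin.orderOf_pos
  -- quadratic relation for z
  have hzc : z^2 + 1 = 2 * (c:ℂ) * z := by
    have pyth : (Complex.cos θ)^2 + (Complex.sin θ)^2 = 1 := Complex.cos_sq_add_sin_sq _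
    have hcc : ((c:ℝ):ℂ) = Complex.cos (θ:ℂ) := Complex.ofReal_cos θ
    rw [hzdef, Complex.exp_mul_I, hcc]
    linear_combination (Complex.sin (θ:ℂ))^2 * Complex.I_sq - pyth
  have hpqC : ((c:ℝ):ℂ)^2 = (pp:ℂ)*((c:ℝ):ℂ) + (qq:ℂ) := by
    exact_mod_cast congrArg (fun x : ℝ => (x:ℂ)) hpq
  -- quartic polynomial killing z
  set Q : ℚ[X] := X^4 + C (-(2*pp)) * X^3 + C (2-4*qq) * X^2 + C (-(2*pp)) * X + C 1 with hQ
  have hQdeg : Q.degree = 4 := by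
    rw [hQ]
    compute_degree!
  have hQne : Q ≠ 0 := fun h => by simp [h] at hQdeg
  have hQroot : Polynomial.aeval z Q = 0 := by
    rw [hQ]
    simp only [map_add, map_mul, map_pow, map_one, Polynomial.aeval_X, Polynomial.aeval_C]
    simp only [eq_ratCast]
    push_cast
    linear_combination (z^2 + 1 + 2*((c:ℝ):ℂ)*z - 2*((pp:ℚ):ℂ)*z) * hzc + 4*z^2 * hpqC
  -- degree bound via minimal polynomial = cyclotomic
  have hmindeg : (minpoly ℚ z).degree ≤ 4 :=
    hQdeg ▸ minpoly.degree_le_of_ne_zero ℚ z hQne hQroot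
  have hcyc : Polynomial.cyclotomic (orderOf z) ℚ = minpoly ℚ z :=
    Polynomial.cyclotomic_eq_minpoly_rat hprim hnpos
  have htot : (orderOf z).totient ≤ 4 := by
    have h4 := hmindeg
    rw [← hcyc, Polynomial.degree_cyclotomic] at h4
    exact_mod_cast h4
  -- express the angle
  have hzn : z ^ (orderOf z) = 1 := pow_orderOf_eq_one z
  rw [hzdef, ← Complex.exp_nat_mul] at hzn
  obtain ⟨k, hk⟩ := Complex.exp_eq_one_iff.mp hzn
  have hre : (orderOf z : ℝ) * θ = (k:ℝ) * (2*π) := by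
    have h5 := congrArg Complex.im hk
    simpa using h5
  obtain ⟨n, hn⟩ : ∃ n, orderOf z = n := ⟨_, rfl⟩
  rw [hn] at htot hnpos hre
  have hn12 : n ≤ 12 := totient_le_four_bound hnpos htot
  have hnz : (n:ℤ) ≠ 0 := by exact_mod_cast hnpos.ne'
  have hker : 0 ≤ k % (n:ℤ) := Int.emod_nonneg _ hnz
  have hklt : k % (n:ℤ) < n := Int.emod_lt_of_pos _ (by exact_mod_cast hnpos)
  obtain ⟨m, hm⟩ : ∃ m : ℕ, (m:ℤ) = k % (n:ℤ) := ⟨(k % (n:ℤ)).toNat, Int.toNat_of_nonneg hker⟩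
  have hmlt : m < n := by omega
  have hq2 := Int.mul_ediv_add_emod k (n:ℤ)
  have hcm : c = Real.cos (2*π*(m:ℝ)/(n:ℝ)) := by
    have hn0 : (n:ℝ) ≠ 0 := by exact_mod_cast hnpos.ne'
    have hkR : (k:ℝ) = (n:ℝ) * ((k / (n:ℤ) : ℤ):ℝ) + (m:ℝ) := by
      exact_mod_cast congrArg (fun t : ℤ => (t:ℝ)) (by omega : k = (n:ℤ) * (k / (n:ℤ)) + (m:ℤ))
    have hθm : θ = 2*π*(m:ℝ)/(n:ℝ) + ((k / (n:ℤ) : ℤ):ℝ) * (2*π) := by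
      field_simp
      linear_combination hre + (2*π) * hkR
    rw [hcdef, hθm, Real.cos_add_int_mul_two_pi]
  clear_value c
  clear hcdef hzn hk hre hn hnz hker hklt hm hq2 hpq hpqC hsum ha2R hqq hpp hProot hPnd hP0 ha2 hPdeg hmindeg hcyc hQroot hQne hQdeg hQ hzc hprim hfin hzpow hzdef hθdef
  clear Q z pp qq P k θ
  interval_cases n
  · -- n = 1
    interval_cases m
    · -- n=1, m=0
      exfalso
      refine hratfalse 1 ?_
      push_cast at hcm
      rw [hcm, show (2*π*0/1:ℝ) = 0 by ring, Real.cos_zero]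
      norm_num
  · -- n = 2
    interval_cases m
    · -- n=2, m=0
      exfalso
      refine hratfalse 1 ?_
      push_cast at hcm
      rw [hcm, show (2*π*0/2:ℝ) = 0 by ring, Real.cos_zero]
      norm_num
    · -- n=2, m=1
      exfalso
      refine hratfalse (-1) ?_
      push_cast at hcm
      rw [hcm, show (2*π*1/2:ℝ) = π by ring, Real.cos_pi]
      norm_num
  · -- n = 3
    interval_cases m
    · -- n=3, m=0
      exfalso
      refine hratfalse 1 ?_
      push_cast at hcm
      rw [hcm, show (2*π*0/3:ℝ) = 0 by ring, Real.cos_zero]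
      norm_num
    · -- n=3, m=1
      exfalso
      refine hratfalse (-(1/2)) ?_
      push_cast at hcm
      rw [hcm, show (2*π*1/3:ℝ) = 2*π/3 by ring, v_2pi3]
      norm_num
    · -- n=3, m=2
      exfalso
      refine hratfalse (-(1/2)) ?_
      push_cast at hcm
      rw [hcm, show (2*π*2/3:ℝ) = 2*π - (2*π/3) by ring, Real.cos_two_pi_sub, v_2pi3]
      norm_num
  · -- n = 4
    interval_cases m
    · -- n=4, m=0
      exfalso
      refine hratfalse 1 ?_
      push_cast at hcm
      rw [hcm, show (2*π*0/4:ℝ) = 0 by ring, Real.cos_zero]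
      norm_num
    · -- n=4, m=1
      exfalso
      refine hratfalse 0 ?_
      push_cast at hcm
      rw [hcm, show (2*π*1/4:ℝ) = π/2 by ring, Real.cos_pi_div_two]
      norm_num
    · -- n=4, m=2
      exfalso
      refine hratfalse (-1) ?_
      push_cast at hcm
      rw [hcm, show (2*π*2/4:ℝ) = π by ring, Real.cos_pi]
      norm_num
    · -- n=4, m=3
      exfalso
      refine hratfalse 0 ?_
      push_cast at hcm
      rw [hcm, show (2*π*3/4:ℝ) = 2*π - (π/2) by ring, Real.cos_two_pi_sub, Real.cos_pi_div_two]
      norm_num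
  · -- n = 5
    interval_cases m
    · -- n=5, m=0
      exfalso
      refine hratfalse 1 ?_
      push_cast at hcm
      rw [hcm, show (2*π*0/5:ℝ) = 0 by ring, Real.cos_zero]
      norm_num
    · -- n=5, m=1
      push_cast at hcm
      rw [hcm, show (2*π*1/5:ℝ) = 2*π/5 by ring, v_2pi5]
      simp only [Set.mem_insert_iff, Set.mem_singleton_iff]
      tauto
    · -- n=5, m=2
      push_cast at hcm
      rw [hcm, show (2*π*2/5:ℝ) = 4*π/5 by ring, v_4pi5]
      simp only [Set.mem_insert_iff, Set.mem_singleton_iff]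
      tauto
    · -- n=5, m=3
      push_cast at hcm
      rw [hcm, show (2*π*3/5:ℝ) = 2*π - (4*π/5) by ring, Real.cos_two_pi_sub, v_4pi5]
      simp only [Set.mem_insert_iff, Set.mem_singleton_iff]
      tauto
    · -- n=5, m=4
      push_cast at hcm
      rw [hcm, show (2*π*4/5:ℝ) = 2*π - (2*π/5) by ring, Real.cos_two_pi_sub, v_2pi5]
      simp only [Set.mem_insert_iff, Set.mem_singleton_iff]
      tauto
  · -- n = 6
    interval_cases m
    · -- n=6, m=0
      exfalso
      refine hratfalse 1 ?_
      push_cast at hcm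
      rw [hcm, show (2*π*0/6:ℝ) = 0 by ring, Real.cos_zero]
      norm_num
    · -- n=6, m=1
      exfalso
      refine hratfalse (1/2) ?_
      push_cast at hcm
      rw [hcm, show (2*π*1/6:ℝ) = π/3 by ring, Real.cos_pi_div_three]
      norm_num
    · -- n=6, m=2
      exfalso
      refine hratfalse (-(1/2)) ?_
      push_cast at hcm
      rw [hcm, show (2*π*2/6:ℝ) = 2*π/3 by ring, v_2pi3]
      norm_num
    · -- n=6, m=3
      exfalso
      refine hratfalse (-1) ?_
      push_cast at hcm
      rw [hcm, show (2*π*3/6:ℝ) = π by ring, Real.cos_pi]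
      norm_num
    · -- n=6, m=4
      exfalso
      refine hratfalse (-(1/2)) ?_
      push_cast at hcm
      rw [hcm, show (2*π*4/6:ℝ) = 2*π - (2*π/3) by ring, Real.cos_two_pi_sub, v_2pi3]
      norm_num
    · -- n=6, m=5
      exfalso
      refine hratfalse (1/2) ?_
      push_cast at hcm
      rw [hcm, show (2*π*5/6:ℝ) = 2*π - (π/3) by ring, Real.cos_two_pi_sub, Real.cos_pi_div_three]
      norm_num
  · -- n = 7
    exact absurd htot (by decide)
  · -- n = 8
    interval_cases m
    · -- n=8, m=0
      exfalso
      refine hratfalse 1 ?_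
      push_cast at hcm
      rw [hcm, show (2*π*0/8:ℝ) = 0 by ring, Real.cos_zero]
      norm_num
    · -- n=8, m=1
      push_cast at hcm
      rw [hcm, show (2*π*1/8:ℝ) = π/4 by ring, Real.cos_pi_div_four]
      simp only [Set.mem_insert_iff, Set.mem_singleton_iff]
      tauto
    · -- n=8, m=2
      exfalso
      refine hratfalse 0 ?_
      push_cast at hcm
      rw [hcm, show (2*π*2/8:ℝ) = π/2 by ring, Real.cos_pi_div_two]
      norm_num
    · -- n=8, m=3
      push_cast at hcm
      rw [hcm, show (2*π*3/8:ℝ) = 3*π/4 by ring, v_3pi4]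
      simp only [Set.mem_insert_iff, Set.mem_singleton_iff]
      tauto
    · -- n=8, m=4
      exfalso
      refine hratfalse (-1) ?_
      push_cast at hcm
      rw [hcm, show (2*π*4/8:ℝ) = π by ring, Real.cos_pi]
      norm_num
    · -- n=8, m=5
      push_cast at hcm
      rw [hcm, show (2*π*5/8:ℝ) = 2*π - (3*π/4) by ring, Real.cos_two_pi_sub, v_3pi4]
      simp only [Set.mem_insert_iff, Set.mem_singleton_iff]
      tauto
    · -- n=8, m=6
      exfalso
      refine hratfalse 0 ?_
      push_cast at hcm
      rw [hcm, show (2*π*6/8:ℝ) = 2*π - (π/2) by ring, Real.cos_two_pi_sub, Real.cos_pi_div_two]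
      norm_num
    · -- n=8, m=7
      push_cast at hcm
      rw [hcm, show (2*π*7/8:ℝ) = 2*π - (π/4) by ring, Real.cos_two_pi_sub, Real.cos_pi_div_four]
      simp only [Set.mem_insert_iff, Set.mem_singleton_iff]
      tauto
  · -- n = 9
    exact absurd htot (by decide)
  · -- n = 10
    interval_cases m
    · -- n=10, m=0
      exfalso
      refine hratfalse 1 ?_
      push_cast at hcm
      rw [hcm, show (2*π*0/10:ℝ) = 0 by ring, Real.cos_zero]
      norm_num
    · -- n=10, m=1
      push_cast at hcm
      rw [hcm, show (2*π*1/10:ℝ) = π/5 by ring, Real.cos_pi_div_five]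
      simp only [Set.mem_insert_iff, Set.mem_singleton_iff]
      tauto
    · -- n=10, m=2
      push_cast at hcm
      rw [hcm, show (2*π*2/10:ℝ) = 2*π/5 by ring, v_2pi5]
      simp only [Set.mem_insert_iff, Set.mem_singleton_iff]
      tauto
    · -- n=10, m=3
      push_cast at hcm
      rw [hcm, show (2*π*3/10:ℝ) = 3*π/5 by ring, v_3pi5]
      simp only [Set.mem_insert_iff, Set.mem_singleton_iff]
      tauto
    · -- n=10, m=4
      push_cast at hcm
      rw [hcm, show (2*π*4/10:ℝ) = 4*π/5 by ring, v_4pi5]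
      simp only [Set.mem_insert_iff, Set.mem_singleton_iff]
      tauto
    · -- n=10, m=5
      exfalso
      refine hratfalse (-1) ?_
      push_cast at hcm
      rw [hcm, show (2*π*5/10:ℝ) = π by ring, Real.cos_pi]
      norm_num
    · -- n=10, m=6
      push_cast at hcm
      rw [hcm, show (2*π*6/10:ℝ) = 2*π - (4*π/5) by ring, Real.cos_two_pi_sub, v_4pi5]
      simp only [Set.mem_insert_iff, Set.mem_singleton_iff]
      tauto
    · -- n=10, m=7
      push_cast at hcm
      rw [hcm, show (2*π*7/10:ℝ) = 2*π - (3*π/5) by ring, Real.cos_two_pi_sub, v_3pi5]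
      simp only [Set.mem_insert_iff, Set.mem_singleton_iff]
      tauto
    · -- n=10, m=8
      push_cast at hcm
      rw [hcm, show (2*π*8/10:ℝ) = 2*π - (2*π/5) by ring, Real.cos_two_pi_sub, v_2pi5]
      simp only [Set.mem_insert_iff, Set.mem_singleton_iff]
      tauto
    · -- n=10, m=9
      push_cast at hcm
      rw [hcm, show (2*π*9/10:ℝ) = 2*π - (π/5) by ring, Real.cos_two_pi_sub, Real.cos_pi_div_five]
      simp only [Set.mem_insert_iff, Set.mem_singleton_iff]
      tauto
  · -- n = 11
    exact absurd htot (by decide)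
  · -- n = 12
    interval_cases m
    · -- n=12, m=0
      exfalso
      refine hratfalse 1 ?_
      push_cast at hcm
      rw [hcm, show (2*π*0/12:ℝ) = 0 by ring, Real.cos_zero]
      norm_num
    · -- n=12, m=1
      push_cast at hcm
      rw [hcm, show (2*π*1/12:ℝ) = π/6 by ring, Real.cos_pi_div_six]
      simp only [Set.mem_insert_iff, Set.mem_singleton_iff]
      tauto
    · -- n=12, m=2
      exfalso
      refine hratfalse (1/2) ?_
      push_cast at hcm
      rw [hcm, show (2*π*2/12:ℝ) = π/3 by ring, Real.cos_pi_div_three]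
      norm_num
    · -- n=12, m=3
      exfalso
      refine hratfalse 0 ?_
      push_cast at hcm
      rw [hcm, show (2*π*3/12:ℝ) = π/2 by ring, Real.cos_pi_div_two]
      norm_num
    · -- n=12, m=4
      exfalso
      refine hratfalse (-(1/2)) ?_
      push_cast at hcm
      rw [hcm, show (2*π*4/12:ℝ) = 2*π/3 by ring, v_2pi3]
      norm_num
    · -- n=12, m=5
      push_cast at hcm
      rw [hcm, show (2*π*5/12:ℝ) = 5*π/6 by ring, v_5pi6]
      simp only [Set.mem_insert_iff, Set.mem_singleton_iff]
      tauto
    · -- n=12, m=6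
      exfalso
      refine hratfalse (-1) ?_
      push_cast at hcm
      rw [hcm, show (2*π*6/12:ℝ) = π by ring, Real.cos_pi]
      norm_num
    · -- n=12, m=7
      push_cast at hcm
      rw [hcm, show (2*π*7/12:ℝ) = 2*π - (5*π/6) by ring, Real.cos_two_pi_sub, v_5pi6]
      simp only [Set.mem_insert_iff, Set.mem_singleton_iff]
      tauto
    · -- n=12, m=8
      exfalso
      refine hratfalse (-(1/2)) ?_
      push_cast at hcm
      rw [hcm, show (2*π*8/12:ℝ) = 2*π - (2*π/3) by ring, Real.cos_two_pi_sub, v_2pi3]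
      norm_num
    · -- n=12, m=9
      exfalso
      refine hratfalse 0 ?_
      push_cast at hcm
      rw [hcm, show (2*π*9/12:ℝ) = 2*π - (π/2) by ring, Real.cos_two_pi_sub, Real.cos_pi_div_two]
      norm_num
    · -- n=12, m=10
      exfalso
      refine hratfalse (1/2) ?_
      push_cast at hcm
      rw [hcm, show (2*π*10/12:ℝ) = 2*π - (π/3) by ring, Real.cos_two_pi_sub, Real.cos_pi_div_three]
      norm_num
    · -- n=12, m=11
      push_cast at hcm
      rw [hcm, show (2*π*11/12:ℝ) = 2*π - (π/6) by ring, Real.cos_two_pi_sub, Real.cos_pi_div_six]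
      simp only [Set.mem_insert_iff, Set.mem_singleton_iff]
      tauto
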